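/- Let Φ = {φ_n}_{n=1}^N ⊆ ℂ³ with N < 8. Then the map A(x) = (|⟨x,φ_n⟩|²)_{n=1}^N is not injective on ℂ³ modulo the unit circle. -/

import Mathlib

open Matrix Complex Finset Module

noncomputable section PR12

local notation "⟪" x ", " y "⟫" => @inner ℂ _ _ x y

abbrev V12 := (Fin 3 → ℝ) × (Fin 3 → ℂ)

def upper12 (z : Fin 3 → ℂ) : Matrix (Fin 3) (Fin 3) ℂ :=
  Matrix.of fun i j =>
    if i = 0 ∧ j = 1 then z 0 else if i = 0 ∧ j = 2 then z 1 else
    if i = 1 ∧ j = 2 then z 2 else 0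

def Hmat12 (v : V12) : Matrix (Fin 3) (Fin 3) ℂ :=
  Matrix.diagonal (fun i => (v.1 i : ℂ)) + upper12 v.2 + (upper12 v.2)ᴴ

lemma upper12_add (z w : Fin 3 → ℂ) : upper12 (z + w) = upper12 z + upper12 w := by
  ext i j
  fin_cases i <;> fin_cases j <;> simp [upper12]

lemma upper12_smul (r : ℝ) (z : Fin 3 → ℂ) : upper12 (r • z) = r • upper12 z := by
  ext i j
  fin_cases i <;> fin_cases j <;> simp [upper12]

lemma real_smul_mat12 (r : ℝ) (M : Matrix (Fin 3) (Fin 3) ℂ) : r • M = (r : ℂ) • M := by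
  ext i j
  simp [Complex.real_smul]

lemma Hmat12_isHermitian (v : V12) : (Hmat12 v).IsHermitian := by
  unfold Matrix.IsHermitian Hmat12
  rw [conjTranspose_add, conjTranspose_add, conjTranspose_conjTranspose,
    diagonal_conjTranspose]
  have : star (fun i => ((v.1 i : ℂ))) = fun i => ((v.1 i : ℂ)) := by
    funext i; simp
  rw [this]
  abel

lemma Hmat12_inj {v : V12} (h : Hmat12 v = 0) : v = 0 := by
  have e : ∀ i j, Hmat12 v i j = 0 := fun i j => by rw [h]; rfl
  have h00 := e 0 0; have h11 := e 1 1; have h22 := e 2 2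
  have h01 := e 0 1; have h02 := e 0 2; have h12 := e 1 2
  simp [Hmat12, upper12, Matrix.diagonal] at h00 h11 h22 h01 h02 h12
  ext i <;> fin_cases i <;> simp_all

lemma Hmat12_add (u v : V12) : Hmat12 (u + v) = Hmat12 u + Hmat12 v := by
  unfold Hmat12
  have hd : (fun i => (((u + v).1 i : ℝ) : ℂ))
      = fun i => ((u.1 i : ℂ)) + ((v.1 i : ℂ)) := by
    funext i
    simp [Prod.fst_add]
  rw [hd, ← Matrix.diagonal_add]
  have hs : (u + v).2 = u.2 + v.2 := rfl
  rw [hs, upper12_add, conjTranspose_add]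
  abel

lemma Hmat12_smul (r : ℝ) (v : V12) : Hmat12 (r • v) = (r : ℂ) • Hmat12 v := by
  unfold Hmat12
  have hd : (fun i => (((r • v).1 i : ℝ) : ℂ)) = (r : ℂ) • (fun i => ((v.1 i : ℂ))) := by
    funext i
    simp [Prod.smul_fst, Complex.real_smul]
  have hs : (r • v).2 = r • v.2 := rfl
  rw [hd, Matrix.diagonal_smul, hs, upper12_smul, real_smul_mat12, conjTranspose_smul]
  simp only [Complex.star_def, Complex.conj_ofReal]
  rw [smul_add, smul_add]

def qf12 (Q : Matrix (Fin 3) (Fin 3) ℂ) (φ : Fin 3 → ℂ) : ℂ :=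
  dotProduct (star φ) (Q *ᵥ φ)

lemma qf12_add (A B : Matrix (Fin 3) (Fin 3) ℂ) (φ : Fin 3 → ℂ) :
    qf12 (A + B) φ = qf12 A φ + qf12 B φ := by
  simp [qf12, Matrix.add_mulVec, dotProduct_add]

lemma qf12_csmul (c : ℂ) (A : Matrix (Fin 3) (Fin 3) ℂ) (φ : Fin 3 → ℂ) :
    qf12 (c • A) φ = c * qf12 A φ := by
  simp [qf12, Matrix.smul_mulVec, dotProduct_smul, smul_eq_mul]

lemma qf12_real {Q : Matrix (Fin 3) (Fin 3) ℂ} (hQ : Q.IsHermitian) (φ : Fin 3 → ℂ) :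
    star (qf12 Q φ) = qf12 Q φ := by
  unfold qf12
  calc star (star φ ⬝ᵥ Q *ᵥ φ) = star (Q *ᵥ φ) ⬝ᵥ φ := by
        rw [Matrix.star_dotProduct, star_star]
    _ = (star φ ᵥ* Qᴴ) ⬝ᵥ φ := by rw [Matrix.star_mulVec]
    _ = star φ ⬝ᵥ (Qᴴ *ᵥ φ) := by rw [← Matrix.dotProduct_mulVec]
    _ = star φ ⬝ᵥ Q *ᵥ φ := by rw [hQ.eq]

def Lmap12 {N : ℕ} (φ : Fin N → Fin 3 → ℂ) : V12 →ₗ[ℝ] (Fin N → ℝ) where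
  toFun v := fun n => (qf12 (Hmat12 v) (φ n)).re
  map_add' u v := by
    funext n
    simp [Hmat12_add, qf12_add]
  map_smul' r v := by
    funext n
    simp only [RingHom.id_apply, Pi.smul_apply, smul_eq_mul]
    rw [Hmat12_smul, qf12_csmul, Complex.re_ofReal_mul]

lemma finrank_V12 : Module.finrank ℝ V12 = 9 := by
  rw [Module.finrank_prod]
  rw [Module.finrank_pi_fintype ℝ (M := fun _ : Fin 3 => ℂ)]
  simp [Complex.finrank_real_complex]

lemma ker_pair12 {N : ℕ} (hN : N < 8) (L : V12 →ₗ[ℝ] (Fin N → ℝ)) :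
    ∃ v1 v2 : V12, (L v1 = 0) ∧ (L v2 = 0) ∧
      ∀ s t : ℝ, s • v1 + t • v2 = 0 → s = 0 ∧ t = 0 := by
  have hrank : finrank ℝ (LinearMap.range L) + finrank ℝ (LinearMap.ker L) = 9 := by
    rw [LinearMap.finrank_range_add_finrank_ker, finrank_V12]
  have hle : finrank ℝ (LinearMap.range L) ≤ N := by
    simpa using Submodule.finrank_le (LinearMap.range L)
  have hker : 1 < finrank ℝ (LinearMap.ker L) := by omega
  have hpos : 0 < finrank ℝ (LinearMap.ker L) := by omega
  have : Nontrivial (LinearMap.ker L) := Module.nontrivial_of_finrank_pos hpos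
  obtain ⟨x, hx⟩ := exists_ne (0 : LinearMap.ker L)
  obtain ⟨y, hxy⟩ := exists_linearIndependent_pair_of_one_lt_finrank hker hx
  refine ⟨(x : V12), (y : V12), x.2, y.2, ?_⟩
  intro s t hst
  have : s • x + t • y = 0 := by
    apply Subtype.ext
    simpa using hst
  exact LinearIndependent.pair_iff.mp hxy s t this

lemma ivt12 (Q1 Q2 : Matrix (Fin 3) (Fin 3) ℂ) :
    ∃ a b : ℝ, a ^ 2 + b ^ 2 = 1 ∧ (((a : ℂ) • Q1 + (b : ℂ) • Q2).det).re = 0 := by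
  set f : ℝ → ℝ :=
    fun t => ((((Real.cos t : ℝ) : ℂ) • Q1 + ((Real.sin t : ℝ) : ℂ) • Q2).det).re with hf
  have hcont : Continuous f := by
    apply Complex.continuous_re.comp
    apply Continuous.matrix_det
    exact ((Complex.continuous_ofReal.comp Real.continuous_cos).smul continuous_const).add
      ((Complex.continuous_ofReal.comp Real.continuous_sin).smul continuous_const)
  have h0 : f 0 = (Q1.det).re := by simp [hf]
  have hpi : f Real.pi = -(Q1.det).re := by
    have h1 : (((Real.cos Real.pi : ℝ) : ℂ) • Q1 + ((Real.sin Real.pi : ℝ) : ℂ) • Q2)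
        = (-1 : ℂ) • Q1 := by
      simp [Real.cos_pi, Real.sin_pi]
    rw [hf]
    simp only [h1, Matrix.det_smul]
    norm_num
  have hex : ∃ t ∈ Set.Icc (0 : ℝ) Real.pi, f t = 0 := by
    rcases le_or_gt (f 0) 0 with h | h
    · have hm : (0 : ℝ) ∈ Set.Icc (f 0) (f Real.pi) := by
        constructor
        · exact h
        · rw [hpi, ← h0]; linarith
      obtain ⟨t, ht, hft⟩ := intermediate_value_Icc Real.pi_pos.le hcont.continuousOn hm
      exact ⟨t, ht, hft⟩
    · have hm : (0 : ℝ) ∈ Set.Icc (f Real.pi) (f 0) := by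
        constructor
        · rw [hpi, ← h0]; linarith
        · exact h.le
      obtain ⟨t, ht, hft⟩ := intermediate_value_Icc' Real.pi_pos.le hcont.continuousOn hm
      exact ⟨t, ht, hft⟩
  obtain ⟨t, _, hft⟩ := hex
  exact ⟨Real.cos t, Real.sin t, by rw [← Real.cos_sq_add_sin_sq t], hft⟩

lemma herm_comb12 {Q1 Q2 : Matrix (Fin 3) (Fin 3) ℂ} (h1 : Q1.IsHermitian)
    (h2 : Q2.IsHermitian) (a b : ℝ) : ((a : ℂ) • Q1 + (b : ℂ) • Q2).IsHermitian := by
  unfold Matrix.IsHermitian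
  rw [conjTranspose_add, conjTranspose_smul, conjTranspose_smul, h1.eq, h2.eq]
  simp [Complex.star_def, Complex.conj_ofReal]

lemma det_zero_of_herm12 {Q : Matrix (Fin 3) (Fin 3) ℂ} (hQ : Q.IsHermitian)
    (hre : (Q.det).re = 0) : Q.det = 0 := by
  have h : star Q.det = Q.det := by
    rw [← Matrix.det_conjTranspose, hQ.eq]
  exact Complex.ext hre (Complex.conj_eq_iff_im.mp h)

lemma inner_expand12 (T : EuclideanSpace ℂ (Fin 3) →ₗ[ℂ] EuclideanSpace ℂ (Fin 3))
    (b : OrthonormalBasis (Fin 3) ℂ (EuclideanSpace ℂ (Fin 3))) (μ : Fin 3 → ℝ)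
    (hT : ∀ i, T (b i) = (μ i : ℂ) • b i) (φ : EuclideanSpace ℂ (Fin 3)) :
    ⟪φ, T φ⟫ = ∑ i, ((μ i : ℂ) * (‖⟪b i, φ⟫‖ ^ 2 : ℝ)) := by
  have hTφ : T φ = ∑ j, ((⟪b j, φ⟫ * (μ j : ℂ)) • b j) := by
    conv_lhs => rw [← b.sum_repr' φ]
    rw [_root_.map_sum]
    refine Finset.sum_congr rfl fun j _ => ?_
    rw [T.map_smul, hT j, smul_smul]
  rw [hTφ, inner_sum]
  refine Finset.sum_congr rfl fun j _ => ?_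
  rw [inner_smul_right, ← inner_conj_symm (b j) φ, RCLike.norm_conj]
  have h2 : (starRingEnd ℂ) (⟪φ, b j⟫) * (μ j : ℂ) * ⟪φ, b j⟫
      = (μ j : ℂ) * ((starRingEnd ℂ) (⟪φ, b j⟫) * ⟪φ, b j⟫) := by ring
  rw [h2, RCLike.conj_mul]
  push_cast
  norm_num

lemma qf12_eigen (Q : Matrix (Fin 3) (Fin 3) ℂ) (hQ : Q.IsHermitian)
    (φ : EuclideanSpace ℂ (Fin 3)) :
    qf12 Q (WithLp.equiv 2 (Fin 3 → ℂ) φ)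
      = ∑ i, ((hQ.eigenvalues i : ℂ) * (‖⟪hQ.eigenvectorBasis i, φ⟫‖ ^ 2 : ℝ)) := by
  have h1 : qf12 Q (WithLp.equiv 2 (Fin 3 → ℂ) φ) = ⟪φ, Matrix.toEuclideanLin Q φ⟫ := by
    unfold qf12
    rw [EuclideanSpace.inner_eq_star_dotProduct, dotProduct_comm]; rfl
  rw [h1]
  apply inner_expand12
  intro i
  apply (WithLp.equiv 2 (Fin 3 → ℂ)).injective
  change Q *ᵥ (WithLp.equiv 2 (Fin 3 → ℂ) (hQ.eigenvectorBasis i)) = _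
  have := hQ.mulVec_eigenvectorBasis i
  simpa [Complex.real_smul] using this

end PR12

theorem stmt_12 (N : ℕ) (hN : N < 8) (Φ : Fin N → EuclideanSpace ℂ (Fin 3)) :
    ¬ ∀ x y : EuclideanSpace ℂ (Fin 3),
        (∀ n, ‖(inner ℂ x (Φ n) : ℂ)‖ ^ 2 = ‖(inner ℂ y (Φ n) : ℂ)‖ ^ 2) →
        ∃ c : ℂ, ‖c‖ = 1 ∧ y = c • x := by
  intro h
  classical
  set φ' : Fin N → Fin 3 → ℂ := fun n => WithLp.equiv 2 (Fin 3 → ℂ) (Φ n) with hφ'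
  obtain ⟨v1, v2, hv1, hv2, hind⟩ := ker_pair12 hN (Lmap12 φ')
  set Q1 := Hmat12 v1 with hQ1
  set Q2 := Hmat12 v2 with hQ2
  have hq1 : ∀ n, qf12 Q1 (φ' n) = 0 := by
    intro n
    have hre : (qf12 Q1 (φ' n)).re = 0 := congr_fun hv1 n
    have hst := qf12_real (Hmat12_isHermitian v1) (φ' n)
    exact Complex.ext hre (Complex.conj_eq_iff_im.mp hst)
  have hq2 : ∀ n, qf12 Q2 (φ' n) = 0 := by
    intro n
    have hre : (qf12 Q2 (φ' n)).re = 0 := congr_fun hv2 n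
    have hst := qf12_real (Hmat12_isHermitian v2) (φ' n)
    exact Complex.ext hre (Complex.conj_eq_iff_im.mp hst)
  obtain ⟨a, b, hab, hdetre⟩ := ivt12 Q1 Q2
  set Q : Matrix (Fin 3) (Fin 3) ℂ := (a : ℂ) • Q1 + (b : ℂ) • Q2 with hQdef
  have hQh : Q.IsHermitian := herm_comb12 (Hmat12_isHermitian v1) (Hmat12_isHermitian v2) a b
  have hdet : Q.det = 0 := det_zero_of_herm12 hQh hdetre
  have hQne : Q ≠ 0 := by
    intro h0
    have hH : Hmat12 (a • v1 + b • v2) = 0 := by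
      rw [Hmat12_add, Hmat12_smul, Hmat12_smul, ← hQ1, ← hQ2, ← hQdef, h0]
    have := Hmat12_inj hH
    obtain ⟨ha, hb⟩ := hind a b this
    rw [ha, hb] at hab
    norm_num at hab
  have hqQ : ∀ n, qf12 Q (φ' n) = 0 := by
    intro n
    rw [hQdef, qf12_add, qf12_csmul, qf12_csmul, hq1 n, hq2 n]
    ring
  set μ : Fin 3 → ℝ := hQh.eigenvalues with hμdef
  set bE := hQh.eigenvectorBasis with hbE
  set w : Fin 3 → Fin N → ℝ := fun i n => ‖(inner ℂ (bE i) (Φ n) : ℂ)‖ ^ 2 with hw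
  have hwnn : ∀ i n, 0 ≤ w i n := fun i n => by positivity
  have keyR : ∀ n, ∑ i, μ i * w i n = 0 := by
    intro n
    have hk := hqQ n
    rw [hφ'] at hk
    rw [qf12_eigen Q hQh (Φ n)] at hk
    exact_mod_cast hk
  -- a zero eigenvalue
  have hμ0 : ∃ i0, μ i0 = 0 := by
    have := hQh.det_eq_prod_eigenvalues
    rw [hdet] at this
    obtain ⟨i0, _, hi0⟩ := Finset.prod_eq_zero_iff.mp this.symm
    refine ⟨i0, ?_⟩
    rw [hμdef]
    simpa using hi0
  by_cases hmix : ∃ j k, 0 < μ j ∧ μ k < 0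
  · -- mixed signs
    obtain ⟨j, k, hj, hk⟩ := hmix
    obtain ⟨i0, hi0⟩ := hμ0
    have hjk : j ≠ k := fun he => by rw [he] at hj; linarith
    have hij0 : i0 ≠ j := fun he => by rw [he] at hi0; linarith
    have hik0 : i0 ≠ k := fun he => by rw [he] at hi0; linarith
    have huniv : (Finset.univ : Finset (Fin 3)) = {i0, j, k} := by
      symm
      apply Finset.eq_univ_of_card
      rw [Finset.card_insert_of_notMem (by simp [hij0, hik0]),
        Finset.card_insert_of_notMem (by simp [hjk]), Finset.card_singleton]
      rfl
    have heq : ∀ n, μ j * w j n = (-μ k) * w k n := by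
      intro n
      have hs := keyR n
      rw [huniv, Finset.sum_insert (by simp [hij0, hik0]),
        Finset.sum_insert (by simp [hjk]), Finset.sum_singleton, hi0] at hs
      linarith
    set x : EuclideanSpace ℂ (Fin 3) := ((Real.sqrt (μ j) : ℝ) : ℂ) • bE j with hx
    set y : EuclideanSpace ℂ (Fin 3) := ((Real.sqrt (-μ k) : ℝ) : ℂ) • bE k with hy
    have hnx : ∀ n, ‖(inner ℂ x (Φ n) : ℂ)‖ ^ 2 = μ j * w j n := by
      intro n
      rw [hx, inner_smul_left, norm_mul, mul_pow, RCLike.norm_conj]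
      have : ‖((Real.sqrt (μ j) : ℝ) : ℂ)‖ = Real.sqrt (μ j) := by
        rw [Complex.norm_real, Real.norm_eq_abs, _root_.abs_of_nonneg (Real.sqrt_nonneg _)]
      rw [this, Real.sq_sqrt hj.le, hw]
    have hny : ∀ n, ‖(inner ℂ y (Φ n) : ℂ)‖ ^ 2 = (-μ k) * w k n := by
      intro n
      rw [hy, inner_smul_left, norm_mul, mul_pow, RCLike.norm_conj]
      have : ‖((Real.sqrt (-μ k) : ℝ) : ℂ)‖ = Real.sqrt (-μ k) := by
        rw [Complex.norm_real, Real.norm_eq_abs, _root_.abs_of_nonneg (Real.sqrt_nonneg _)]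
      rw [this, Real.sq_sqrt (by linarith), hw]
    have hmeas : ∀ n, ‖(inner ℂ x (Φ n) : ℂ)‖ ^ 2 = ‖(inner ℂ y (Φ n) : ℂ)‖ ^ 2 := by
      intro n
      rw [hnx n, hny n, heq n]
    obtain ⟨c, hc, hcy⟩ := h x y hmeas
    have h1 : (inner ℂ x y : ℂ) = 0 := by
      rw [hx, hy, inner_smul_left, inner_smul_right, bE.orthonormal.2 hjk]
      ring
    have h2 : (inner ℂ x y : ℂ) = c * (μ j : ℂ) := by
      rw [hcy, inner_smul_right, hx, inner_smul_left, inner_smul_right]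
      have hbb : (inner ℂ (bE j) (bE j) : ℂ) = 1 := by
        rw [@inner_self_eq_norm_sq_to_K ℂ]
        rw [bE.orthonormal.1 j]
        norm_num
      rw [hbb, Complex.conj_ofReal, mul_one, ← Complex.ofReal_mul, Real.mul_self_sqrt hj.le]
    rw [h2] at h1
    have hcne : c ≠ 0 := by
      intro h0; rw [h0] at hc; simp at hc
    have : (μ j : ℂ) ≠ 0 := by
      simp only [ne_eq, Complex.ofReal_eq_zero]
      linarith
    exact (mul_ne_zero hcne this) h1
  · -- definite sign
    push_neg at hmix
    have hsign : ∀ j, 0 < μ j → ∀ k, 0 ≤ μ k := by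
      intro j hj k
      exact hmix j k hj
    have hjex : ∃ j, μ j ≠ 0 := by
      by_contra hall
      push_neg at hall
      apply hQne
      have hsp := hQh.spectral_theorem
      have hdiag : Matrix.diagonal (RCLike.ofReal ∘ μ) = (0 : Matrix (Fin 3) (Fin 3) ℂ) := by
        ext i jj
        by_cases hij : i = jj <;> simp [Matrix.diagonal, hij, hall]
      rw [hsp, hdiag]
      simp
    obtain ⟨j, hjne⟩ := hjex
    have hwj : ∀ n, w j n = 0 := by
      intro n
      rcases lt_or_gt_of_ne hjne with hneg | hpos
      · -- all nonpositive
        have hall : ∀ i, μ i ≤ 0 := by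
          intro i
          by_contra hip
          push_neg at hip
          have := hsign i hip j
          linarith
        have hterm : ∀ i ∈ Finset.univ, μ i * w i n ≤ 0 :=
          fun i _ => mul_nonpos_of_nonpos_of_nonneg (hall i) (hwnn i n)
        have hz := (Finset.sum_eq_zero_iff_of_nonpos hterm).mp (keyR n) j (Finset.mem_univ j)
        rcases mul_eq_zero.mp hz with h' | h'
        · exact absurd h' hjne
        · exact h'
      · -- all nonnegative
        have hterm : ∀ i ∈ Finset.univ, 0 ≤ μ i * w i n :=
          fun i _ => mul_nonneg (hsign j hpos i) (hwnn i n)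
        have hz := (Finset.sum_eq_zero_iff_of_nonneg hterm).mp (keyR n) j (Finset.mem_univ j)
        rcases mul_eq_zero.mp hz with h' | h'
        · exact absurd h' hjne
        · exact h'
    have hmeas : ∀ n, ‖(inner ℂ (0 : EuclideanSpace ℂ (Fin 3)) (Φ n) : ℂ)‖ ^ 2
        = ‖(inner ℂ (bE j) (Φ n) : ℂ)‖ ^ 2 := by
      intro n
      rw [inner_zero_left]
      have := hwj n
      rw [hw] at this
      simp only [this]
      simp
    obtain ⟨c, hc, hcy⟩ := h 0 (bE j) hmeas
    have : bE j = 0 := by rw [hcy, smul_zero]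
    have hb1 : ‖bE j‖ = 1 := bE.orthonormal.1 j
    rw [this] at hb1
    simp at hb1
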